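/- Let d ≥ 2 be an integer. Define, for even r ∈ {1,…,d}, G(r) := (2(2d² − 1)/r − (2d − 1))/(2d(d² − 1)) and for odd r ∈ {1,…,d}, G(r) := (4d²/r − (2d+1)/r² − (2d − 1))/(2d(d² − 1)). Then G is minimized over r ∈ {1,…,d} at r = d. -/
import Mathlib

theorem stmt_17 (d : ℕ) (hd : 2 ≤ d) (G : ℕ → ℝ)
    (hG : ∀ r, G r = if r % 2 = 0 then
        (2 * (2 * (d : ℝ) ^ 2 - 1) / r - (2 * d - 1)) / (2 * d * ((d : ℝ) ^ 2 - 1))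
      else
        (4 * (d : ℝ) ^ 2 / r - (2 * d + 1) / (r : ℝ) ^ 2 - (2 * d - 1))
          / (2 * d * ((d : ℝ) ^ 2 - 1))) :
    ∀ r : ℕ, 1 ≤ r → r ≤ d → G d ≤ G r := by
  intro r h1 hr
  rw [hG d, hG r]
  have hx : (2:ℝ) ≤ (d:ℝ) := by exact_mod_cast hd
  have hx0 : (0:ℝ) < (d:ℝ) := by linarith
  have hxne : (d:ℝ) ≠ 0 := ne_of_gt hx0
  have hR1 : (1:ℝ) ≤ (r:ℝ) := by exact_mod_cast h1
  have hR0 : (0:ℝ) < (r:ℝ) := by linarith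
  have hRne : (r:ℝ) ≠ 0 := ne_of_gt hR0
  have hRd : (r:ℝ) ≤ (d:ℝ) := by exact_mod_cast hr
  have hden : (0:ℝ) < 2 * (d:ℝ) * ((d : ℝ) ^ 2 - 1) := by nlinarith
  rcases Nat.mod_two_eq_zero_or_one d with hdp | hdp <;>
    rcases Nat.mod_two_eq_zero_or_one r with hrp | hrp <;>
    simp only [hdp, hrp] <;> norm_num <;>
    rw [div_le_div_iff₀ hden hden]
  · -- d even, r even
    have key : 2 * (2 * (d:ℝ) ^ 2 - 1) / d ≤ 2 * (2 * (d:ℝ) ^ 2 - 1) / r := by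
      rw [div_le_div_iff₀ hx0 hR0]; nlinarith
    nlinarith
  · -- d even, r odd: r + 1 ≤ d
    have hrd1 : r + 1 ≤ d := by omega
    have hRd1 : (r:ℝ) + 1 ≤ (d:ℝ) := by exact_mod_cast hrd1
    have key : 2 * (2 * (d:ℝ) ^ 2 - 1) / d ≤
        4 * (d:ℝ) ^ 2 / r - (2 * d + 1) / (r:ℝ) ^ 2 := by
      rw [div_sub_div _ _ hRne (by positivity), div_le_div_iff₀ hx0 (by positivity)]
      nlinarith [mul_nonneg (sub_nonneg.2 hR1) (sub_nonneg.2 hRd1), sq_nonneg ((r:ℝ)-1), mul_nonneg (sub_nonneg.2 hx) (sq_nonneg (d:ℝ)), mul_nonneg (mul_nonneg (sub_nonneg.2 hR1) (sub_nonneg.2 hRd1)) hx0.le]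
    nlinarith
  · -- d odd, r even
    have key : 4 * (d:ℝ) ^ 2 / d - (2 * d + 1) / (d:ℝ) ^ 2 ≤
        2 * (2 * (d:ℝ) ^ 2 - 1) / r := by
      rw [div_sub_div _ _ hxne (by positivity), div_le_div_iff₀ (by positivity) hR0]
      nlinarith [mul_nonneg (sub_nonneg.2 hRd) hx0.le, mul_nonneg (sub_nonneg.2 hRd) (mul_nonneg hx0.le hx0.le)]
    nlinarith
  · -- d odd, r odd
    have key : 4 * (d:ℝ) ^ 2 / d - (2 * d + 1) / (d:ℝ) ^ 2 ≤
        4 * (d:ℝ) ^ 2 / r - (2 * d + 1) / (r:ℝ) ^ 2 := by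
      rw [div_sub_div _ _ hxne (by positivity), div_sub_div _ _ hRne (by positivity),
        div_le_div_iff₀ (by positivity) (by positivity)]
      have h2 : (0:ℝ) ≤ 4 * (d:ℝ)^3 * r - (2 * d + 1) * ((d:ℝ) + r) := by
        nlinarith [mul_nonneg (sub_nonneg.2 hRd) hx0.le, mul_nonneg (sub_nonneg.2 hR1) (mul_nonneg (mul_nonneg hx0.le hx0.le) hx0.le)]
      nlinarith [mul_nonneg (mul_nonneg (mul_nonneg hx0.le hR0.le) (sub_nonneg.2 hRd)) h2]
    nlinarith
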